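/- Fix a real number α ≥ 1. There exists a constant C_α > 0, depending only on α, such that for every n ≥ 1, with eigenvalues λ_i = i^{−2α} for i = 1,…,n and regularization parameter τ_n = n^{−2α/(2α+1)}, the kernel ridge regression variance term satisfies (1/n)·Σ_{i=1}^n (λ_i/(λ_i + τ_n))² = (1/n)·Σ_{i=1}^n (i^{−2α}/(i^{−2α} + n^{−2α/(2α+1)}))² ≤ C_α·n^{−2α/(2α+1)}. -/

import Mathlib

theorem stmt15 (α : ℝ) (hα : 1 ≤ α) :
    ∃ C : ℝ, 0 < C ∧ ∀ n : ℕ, 1 ≤ n →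
      (1/(n:ℝ)) * ∑ i ∈ Finset.Icc 1 n,
        ((i:ℝ) ^ (-(2*α)) / ((i:ℝ) ^ (-(2*α)) + (n:ℝ) ^ (-(2*α)/(2*α+1))))^2
      ≤ C * (n:ℝ) ^ (-(2*α)/(2*α+1)) := by
  refine ⟨1 + 2 ^ (4*α - 1), by positivity, fun n hn => ?_⟩
  have hn0 : (0:ℝ) < n := by exact_mod_cast hn
  have hn1 : (1:ℝ) ≤ n := by exact_mod_cast hn
  have h2α1 : (0:ℝ) < 2*α+1 := by linarith
  set τ : ℝ := (n:ℝ) ^ (-(2*α)/(2*α+1)) with hτdef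
  have hτ0 : 0 < τ := Real.rpow_pos_of_pos hn0 _
  set r : ℝ := (n:ℝ) ^ ((1:ℝ)/(2*α+1)) with hrdef
  have hr1 : 1 ≤ r := Real.one_le_rpow hn1 (by positivity)
  have hr0 : 0 < r := by linarith
  set m : ℕ := ⌊r⌋₊ with hmdef
  have hm1 : 1 ≤ m := Nat.le_floor (by exact_mod_cast hr1)
  have hm0 : (0:ℝ) < m := by exact_mod_cast hm1
  have hmr : (m:ℝ) ≤ r := Nat.floor_le hr0.le
  have hrm : r ≤ m + 1 := (Nat.lt_floor_add_one r).le
  have hrm2 : r ≤ 2 * m := by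
    have : (1:ℝ) ≤ m := by exact_mod_cast hm1
    linarith
  have hrn : r ≤ n := by
    calc r ≤ (n:ℝ) ^ (1:ℝ) :=
          Real.rpow_le_rpow_of_exponent_le hn1 (by rw [div_le_one h2α1]; linarith)
    _ = n := Real.rpow_one _
  have hmn : m ≤ n := by exact_mod_cast hmr.trans hrn
  have hτr : τ = r ^ (-(2*α)) := by
    rw [hrdef, hτdef, ← Real.rpow_mul hn0.le]
    congr 1
    ring
  have hτn : τ = r / n := by
    rw [hτdef, show -(2*α)/(2*α+1) = 1/(2*α+1) - 1 by field_simp; ring,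
      Real.rpow_sub hn0, Real.rpow_one, hrdef]
  -- split the sum
  have hsplit : ∑ i ∈ Finset.Icc 1 n, ((i:ℝ) ^ (-(2*α)) / ((i:ℝ) ^ (-(2*α)) + τ))^2
      = (∑ i ∈ Finset.Ioc 0 m, ((i:ℝ) ^ (-(2*α)) / ((i:ℝ) ^ (-(2*α)) + τ))^2)
        + ∑ i ∈ Finset.Ioc m n, ((i:ℝ) ^ (-(2*α)) / ((i:ℝ) ^ (-(2*α)) + τ))^2 := by
    have h01 : Finset.Icc 1 n = Finset.Ioc 0 n := by rw [← Finset.Icc_add_one_left_eq_Ioc]; rfl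
    rw [h01, ← Finset.sum_Ioc_consecutive _ (Nat.zero_le m) hmn]
  -- bound the first sum by m
  have hS1 : ∑ i ∈ Finset.Ioc 0 m,
      ((i:ℝ) ^ (-(2*α)) / ((i:ℝ) ^ (-(2*α)) + τ))^2 ≤ (m:ℝ) := by
    have hb : ∀ i ∈ Finset.Ioc 0 m,
        ((i:ℝ) ^ (-(2*α)) / ((i:ℝ) ^ (-(2*α)) + τ))^2 ≤ 1 := by
      intro i hi
      simp only [Finset.mem_Ioc] at hi
      have hi0 : (0:ℝ) < i := by exact_mod_cast hi.1
      have hL0 : (0:ℝ) < (i:ℝ) ^ (-(2*α)) := Real.rpow_pos_of_pos hi0 _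
      have h1 : (i:ℝ) ^ (-(2*α)) / ((i:ℝ) ^ (-(2*α)) + τ) ≤ 1 :=
        (div_le_one (by positivity)).mpr (le_add_of_nonneg_right hτ0.le)
      exact pow_le_one₀ (by positivity) h1
    calc ∑ i ∈ Finset.Ioc 0 m, ((i:ℝ) ^ (-(2*α)) / ((i:ℝ) ^ (-(2*α)) + τ))^2
        ≤ (Finset.Ioc 0 m).card • (1:ℝ) := Finset.sum_le_card_nsmul _ _ 1 hb
    _ = (m:ℝ) := by simp
  -- bound the second sum
  have hS2 : ∑ i ∈ Finset.Ioc m n,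
      ((i:ℝ) ^ (-(2*α)) / ((i:ℝ) ^ (-(2*α)) + τ))^2 ≤ 2 ^ (4*α-1) * r := by
    have hstep : ∀ i ∈ Finset.Ioc m n,
        ((i:ℝ) ^ (-(2*α)) / ((i:ℝ) ^ (-(2*α)) + τ))^2 ≤
          ((i:ℝ)^2)⁻¹ * ((m:ℝ) ^ (2-4*α) / τ^2) := by
      intro i hi
      simp only [Finset.mem_Ioc] at hi
      have hmi : (m:ℝ) ≤ i := by exact_mod_cast hi.1.le
      have hi0 : (0:ℝ) < i := lt_of_lt_of_le hm0 hmi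
      have hL0 : (0:ℝ) < (i:ℝ) ^ (-(2*α)) := Real.rpow_pos_of_pos hi0 _
      have h1 : (i:ℝ) ^ (-(2*α)) / ((i:ℝ) ^ (-(2*α)) + τ) ≤ (i:ℝ) ^ (-(2*α)) / τ :=
        div_le_div_of_nonneg_left hL0.le hτ0 (le_add_of_nonneg_left hL0.le)
      have h2 : ((i:ℝ) ^ (-(2*α)) / ((i:ℝ) ^ (-(2*α)) + τ))^2 ≤
          ((i:ℝ) ^ (-(2*α)))^2 / τ^2 := by
        rw [← div_pow]
        exact pow_le_pow_left₀ (by positivity) h1 2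
      refine h2.trans ?_
      have hisq : ((i:ℝ) ^ (-(2*α)))^2 = (i:ℝ) ^ (-(4*α)) := by
        rw [← Real.rpow_natCast ((i:ℝ) ^ (-(2*α))) 2, ← Real.rpow_mul hi0.le]
        congr 1
        push_cast
        ring
      have hinv : ((i:ℝ)^2)⁻¹ = (i:ℝ) ^ (-(2:ℝ)) := by
        rw [← Real.rpow_natCast (i:ℝ) 2, ← Real.rpow_neg hi0.le]
        norm_num
      have hdecomp : (i:ℝ) ^ (-(4*α)) = ((i:ℝ)^2)⁻¹ * (i:ℝ) ^ (2-4*α) := by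
        rw [hinv, ← Real.rpow_add hi0]
        congr 1
        ring
      rw [hisq]
      calc (i:ℝ) ^ (-(4*α)) / τ^2
          = ((i:ℝ)^2)⁻¹ * ((i:ℝ) ^ (2-4*α) / τ^2) := by rw [hdecomp]; ring
      _ ≤ ((i:ℝ)^2)⁻¹ * ((m:ℝ) ^ (2-4*α) / τ^2) := by
          have hmono : (i:ℝ) ^ (2-4*α) ≤ (m:ℝ) ^ (2-4*α) :=
            Real.rpow_le_rpow_of_nonpos hm0 hmi (by linarith)
          gcongr
    calc ∑ i ∈ Finset.Ioc m n, ((i:ℝ) ^ (-(2*α)) / ((i:ℝ) ^ (-(2*α)) + τ))^2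
        ≤ ∑ i ∈ Finset.Ioc m n, ((i:ℝ)^2)⁻¹ * ((m:ℝ) ^ (2-4*α) / τ^2) :=
          Finset.sum_le_sum hstep
    _ = (∑ i ∈ Finset.Ioc m n, ((i:ℝ)^2)⁻¹) * ((m:ℝ) ^ (2-4*α) / τ^2) := by
          rw [Finset.sum_mul]
    _ ≤ (m:ℝ)⁻¹ * ((m:ℝ) ^ (2-4*α) / τ^2) := by
          have hsum := sum_Ioc_inv_sq_le_sub (α := ℝ) (Nat.one_le_iff_ne_zero.mp hm1) hmn
          have hs : (∑ i ∈ Finset.Ioc m n, ((i:ℝ)^2)⁻¹) ≤ (m:ℝ)⁻¹ := by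
            refine hsum.trans ?_
            simp [inv_nonneg.mpr hn0.le]
          exact mul_le_mul_of_nonneg_right hs (by positivity)
    _ = (m:ℝ) ^ (1-4*α) / τ^2 := by
          have hminv : (m:ℝ)⁻¹ = (m:ℝ) ^ (-(1:ℝ)) := by
            rw [← Real.rpow_neg_one]
          rw [hminv, div_eq_mul_inv, div_eq_mul_inv, ← mul_assoc, ← Real.rpow_add hm0]
          congr 2
          ring
    _ ≤ (r/2) ^ (1-4*α) / τ^2 := by
          have hmono2 : (m:ℝ) ^ (1-4*α) ≤ (r/2) ^ (1-4*α) :=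
            Real.rpow_le_rpow_of_nonpos (by positivity) (by linarith) (by linarith)
          gcongr
    _ = 2 ^ (4*α-1) * r := by
          have hτsq : τ^2 = r ^ (-(4*α)) := by
            rw [hτr, ← Real.rpow_natCast (r ^ (-(2*α))) 2, ← Real.rpow_mul hr0.le]
            congr 1
            push_cast
            ring
          have e1 : (r/2) ^ (1-4*α) = r ^ (1-4*α) * 2 ^ (4*α-1) := by
            rw [Real.div_rpow hr0.le (by norm_num : (0:ℝ) ≤ 2), div_eq_mul_inv,
              ← Real.rpow_neg (by norm_num : (0:ℝ) ≤ 2)]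
            congr 2
            ring
          rw [hτsq, Real.rpow_neg hr0.le, e1, div_eq_mul_inv, inv_inv]
          calc r ^ (1-4*α) * 2 ^ (4*α-1) * r ^ (4*α)
              = (r ^ (1-4*α) * r ^ (4*α)) * 2 ^ (4*α-1) := by ring
          _ = r ^ ((1-4*α) + 4*α) * 2 ^ (4*α-1) := by rw [Real.rpow_add hr0]
          _ = 2 ^ (4*α-1) * r := by
              rw [show (1-4*α) + 4*α = (1:ℝ) by ring, Real.rpow_one]
              ring
  -- combine
  have hc0 : (0:ℝ) ≤ 2 ^ (4*α-1) := by positivity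
  have htot : ∑ i ∈ Finset.Icc 1 n, ((i:ℝ) ^ (-(2*α)) / ((i:ℝ) ^ (-(2*α)) + τ))^2
      ≤ (1 + 2 ^ (4*α-1)) * r := by
    rw [hsplit]
    have : (1 + 2 ^ (4*α-1)) * r = r + 2 ^ (4*α-1) * r := by ring
    linarith
  calc (1/(n:ℝ)) * ∑ i ∈ Finset.Icc 1 n,
        ((i:ℝ) ^ (-(2*α)) / ((i:ℝ) ^ (-(2*α)) + τ))^2
      ≤ (1/(n:ℝ)) * ((1 + 2 ^ (4*α-1)) * r) := by
        apply mul_le_mul_of_nonneg_left htot (by positivity)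
  _ = (1 + 2 ^ (4*α-1)) * (r / n) := by ring
  _ = (1 + 2 ^ (4*α-1)) * τ := by rw [hτn]
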